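/- If u ∈ C³([0,L]) satisfies u''' + a u' + u u' = 0 on [0,L] with u(0) = u(L) = u'(L) = 0, then u'(0) = 0. -/

import Mathlib

open Set

/-- If `u ∈ C³` satisfies `u''' + a u' + u u' = 0` on `[0,L]` with
`u(0) = u(L) = u'(L) = 0`, then `u'(0) = 0`. -/
theorem deriv_zero_at_left (a L : ℝ) (hL : 0 < L) (u : ℝ → ℝ)
    (hu : ContDiff ℝ 3 u)
    (heq : ∀ x ∈ Icc (0:ℝ) L,
      deriv (deriv (deriv u)) x + a * deriv u x + u x * deriv u x = 0)
    (h0 : u 0 = 0) (hL0 : u L = 0) (hL1 : deriv u L = 0) :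
    deriv u 0 = 0 := by
  have hu3 : ContDiff ℝ (2+1) u := by exact_mod_cast hu
  have h1 : ContDiff ℝ 2 (deriv u) := (contDiff_succ_iff_deriv.mp hu3).2.2
  have h1' : ContDiff ℝ (1+1) (deriv u) := by exact_mod_cast h1
  have h2 : ContDiff ℝ 1 (deriv (deriv u)) := (contDiff_succ_iff_deriv.mp h1').2.2
  have du : Differentiable ℝ u := (contDiff_succ_iff_deriv.mp hu3).1
  have dd1 : Differentiable ℝ (deriv u) := (contDiff_succ_iff_deriv.mp h1').1
  have dd2 : Differentiable ℝ (deriv (deriv u)) :=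
    h2.differentiable one_ne_zero
  set F : ℝ → ℝ := fun x =>
    u x * deriv (deriv u) x - (deriv u x)^2/2 + a*(u x)^2/2 + (u x)^3/3 with hF
  have hFderiv : ∀ x, HasDerivAt F
      (deriv u x * deriv (deriv u) x + u x * deriv (deriv (deriv u)) x
        - (2 * deriv u x * deriv (deriv u) x)/2
        + a * (2 * u x * deriv u x)/2 + (3 * (u x)^2 * deriv u x)/3) x := by
    intro x
    have h₁ : HasDerivAt u (deriv u x) x := (du x).hasDerivAt
    have h₂ : HasDerivAt (deriv u) (deriv (deriv u) x) x := (dd1 x).hasDerivAt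
    have h₃ : HasDerivAt (deriv (deriv u)) (deriv (deriv (deriv u)) x) x :=
      (dd2 x).hasDerivAt
    have := ((((h₁.mul h₃).sub (((h₂.pow 2)).div_const 2)).add
      (((h₁.pow 2).const_mul a).div_const 2)).add ((h₁.pow 3).div_const 3))
    convert this using 1
    · rfl
    · rfl
    · rfl
    · norm_num
  have hFzero : ∀ x ∈ Icc (0:ℝ) L, deriv F x = 0 := by
    intro x hx
    rw [(hFderiv x).deriv]
    have := heq x hx
    linear_combination u x * this
  have hconst : F L = F 0 := by
    have hdF : ∀ x ∈ Icc (0:ℝ) L, HasDerivAt F 0 x := by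
      intro x hx
      have := (hFderiv x).deriv ▸ hFzero x hx
      simpa [this] using (hFderiv x)
    have hcont : ContinuousOn F (Icc 0 L) :=
      fun x _ => ((hFderiv x).differentiableAt.continuousAt).continuousWithinAt
    exact (constant_of_has_deriv_right_zero hcont
      (fun x hx => (hdF x (Ico_subset_Icc_self hx)).hasDerivWithinAt)) L
      (right_mem_Icc.mpr hL.le)
  have hFL : F L = 0 := by simp [hF, hL0, hL1]
  have hF0 : F 0 = -(deriv u 0)^2/2 := by simp [hF, h0]; ring
  have : (deriv u 0)^2 = 0 := by
    have := hconst; rw [hFL, hF0] at this; linarith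
  exact pow_eq_zero_iff two_ne_zero |>.mp this
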